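/- arXiv:2410.22442 — 3 statements merged into one kernel-verified Lean document; each statement's English description precedes it below -/
import Mathlib

section
/- The map f : R^n → R^n is continuous, every fiber of f contains at most two points, and the ramification locus Ram(f) := { x ∈ R^n : f is injective on no neighborhood of x } is exactly the singleton {0⃗}. (In particular, f is a finite-to-one continuous self-map of R^n whose ramification locus is non-empty of topological dimension 0, witnessing the failure of manifold ramification purity of every order d < n.) -/
/- Context: `R` is a linearly ordered field with its order topology, `V ⊆ R` a convex
subring, `ε ∈ V` positive with `ε⁻¹ ∉ V`, and `n = m + 2 ≥ 2`.  The space `R^n` is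
`Fin (m + 2) → R` with the product topology; the last coordinate is `Fin.last (m + 1)`. -/

noncomputable section

/-- `sSum m x = x₁² + ⋯ + x_{n-1}²` (the sum of squares of all but the last coordinate). -/
def sSum {R : Type*} [Field R] [LinearOrder R] [IsStrictOrderedRing R] (m : ℕ) (x : Fin (m + 2) → R) : R :=
  ∑ i : Fin (m + 1), x i.castSucc ^ 2

/-- `A = { x ≠ 0 : xₙ² = a·(x₁² + ⋯ + x_{n-1}²) for some a ∈ V }`. -/
def setA {R : Type*} [Field R] [LinearOrder R] [IsStrictOrderedRing R] (V : Subring R) (m : ℕ) :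
    Set (Fin (m + 2) → R) :=
  {x | x ≠ 0 ∧ ∃ a ∈ V, x (Fin.last (m + 1)) ^ 2 = a * sSum m x}

/-- `B = (R^n \ {0}) \ A`. -/
def setB {R : Type*} [Field R] [LinearOrder R] [IsStrictOrderedRing R] (V : Subring R) (m : ℕ) :
    Set (Fin (m + 2) → R) :=
  {x | x ≠ 0} \ setA V m

/-- `h(x₁,…,xₙ) = (x₁,…,x_{n-1}, ε·xₙ)`. -/
def hMap {R : Type*} [Field R] [LinearOrder R] [IsStrictOrderedRing R] (ε : R) (m : ℕ) (x : Fin (m + 2) → R) :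
    Fin (m + 2) → R :=
  Function.update x (Fin.last (m + 1)) (ε * x (Fin.last (m + 1)))

/-- `f(0) = 0`, `f = id` on `A`, `f = h` on `B`. -/
def fMap {R : Type*} [Field R] [LinearOrder R] [IsStrictOrderedRing R] (V : Subring R) (ε : R) (m : ℕ)
    (x : Fin (m + 2) → R) : Fin (m + 2) → R := by
  classical
  exact if x = 0 then 0 else if x ∈ setA V m then x else hMap ε m x

end

section
variable {R : Type*} [Field R] [LinearOrder R] [IsStrictOrderedRing R] (V : Subring R)
  (hV : ∀ x y : R, y ∈ V → |x| ≤ |y| → x ∈ V)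

include hV

lemma eps_mul_lt_one {ε : R} (hε0 : 0 < ε) (hεinv : ε⁻¹ ∉ V) {a : R}
    (ha : a ∈ V) (ha0 : 0 ≤ a) : ε * a < 1 := by
  by_contra h
  push_neg at h
  have ha0' : 0 < a := by
    rcases ha0.lt_or_eq with h'|h'
    · exact h'
    · exfalso; rw [← h', mul_zero] at h; exact absurd h (by norm_num)
  have hi : ε⁻¹ ≤ a := by
    have h2 := mul_le_mul_of_nonneg_left h (le_of_lt (inv_pos.2 hε0))
    rw [mul_one, ← mul_assoc, inv_mul_cancel₀ (ne_of_gt hε0), one_mul] at h2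
    exact h2
  exact hεinv (hV _ _ ha (by rw [abs_of_nonneg (le_of_lt (inv_pos.2 hε0)), abs_of_pos ha0']; exact hi))

lemma eps_lt_one {ε : R} (hε0 : 0 < ε) (hεinv : ε⁻¹ ∉ V) : ε < 1 := by
  have := eps_mul_lt_one V hV hε0 hεinv (V.one_mem) zero_le_one
  simpa using this

lemma eps_sq_inv_not_mem {ε : R} (hε0 : 0 < ε) (hεinv : ε⁻¹ ∉ V) : ε⁻¹ ^ 2 ∉ V := by
  intro h
  have h1 : (1:R) < ε⁻¹ := (one_lt_inv₀ hε0).2 (eps_lt_one V hV hε0 hεinv)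
  have h2 : ε⁻¹ ≤ ε⁻¹ ^ 2 := le_self_pow₀ (le_of_lt h1) two_ne_zero
  exact hεinv (hV _ _ h (by rw [abs_of_pos (lt_trans one_pos h1), abs_of_pos (by positivity)]; exact h2))

variable [TopologicalSpace R] [OrderTopology R]

lemma isOpen_V : IsOpen (V : Set R) := by
  rw [isOpen_iff_mem_nhds]
  intro y hy
  have : Set.Ioo (y - 1) (y + 1) ⊆ (V : Set R) := by
    intro z hz
    refine hV z (|y| + 1) (V.add_mem (hV _ _ hy (by rw [abs_abs])) V.one_mem) ?_
    have h1 : |z - y| < 1 := by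
      rw [abs_sub_lt_iff]; constructor <;> [linarith [hz.2]; linarith [hz.1]]
    have := abs_sub_abs_le_abs_sub z y
    rw [abs_of_nonneg (by positivity : (0:R) ≤ |y| + 1)]
    linarith
  exact Filter.mem_of_superset (Ioo_mem_nhds (by linarith) (by linarith)) this

lemma isClosed_V : IsClosed (V : Set R) := by
  rw [← isOpen_compl_iff, isOpen_iff_mem_nhds]
  intro x hx
  have : Set.Ioo (x - 1) (x + 1) ⊆ (V : Set R)ᶜ := by
    intro z hz hzV
    apply hx
    refine hV x (|z| + 1) (V.add_mem (hV _ _ hzV (by rw [abs_abs])) V.one_mem) ?_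
    have h1 : |x - z| < 1 := by
      rw [abs_sub_lt_iff]; constructor <;> [linarith [hz.1]; linarith [hz.2]]
    have := abs_sub_abs_le_abs_sub x z
    rw [abs_of_nonneg (by positivity : (0:R) ≤ |z| + 1)]
    linarith
  exact Filter.mem_of_superset (Ioo_mem_nhds (by linarith) (by linarith)) this

end

section
variable {R : Type*} [Field R] [LinearOrder R] [IsStrictOrderedRing R] {m : ℕ}

lemma sSum_nonneg (x : Fin (m+2) → R) : 0 ≤ sSum m x :=
  Finset.sum_nonneg fun i _ => sq_nonneg _

lemma sSum_eq_zero_iff (x : Fin (m+2) → R) :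
    sSum m x = 0 ↔ ∀ i : Fin (m+1), x i.castSucc = 0 := by
  rw [sSum, Finset.sum_eq_zero_iff_of_nonneg (fun i _ => sq_nonneg _)]
  simp [pow_eq_zero_iff]

lemma eq_zero_of_coords (x : Fin (m+2) → R) (h1 : ∀ i : Fin (m+1), x i.castSucc = 0)
    (h2 : x (Fin.last (m+1)) = 0) : x = 0 := by
  funext j
  rcases Fin.eq_castSucc_or_eq_last j with ⟨i, rfl⟩ | rfl
  · exact h1 i
  · exact h2

lemma continuous_sSum [TopologicalSpace R] [OrderTopology R] :
    Continuous (sSum m : (Fin (m+2) → R) → R) := by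
  unfold sSum
  exact continuous_finset_sum _ fun i _ => (continuous_apply _).pow 2

lemma mem_setA_iff (V : Subring R) (x : Fin (m+2) → R) :
    x ∈ setA V m ↔ sSum m x ≠ 0 ∧ x (Fin.last (m+1)) ^ 2 / sSum m x ∈ V := by
  constructor
  · rintro ⟨hx0, a, haV, ha⟩
    have hs : sSum m x ≠ 0 := by
      intro h
      rw [h, mul_zero, pow_eq_zero_iff two_ne_zero] at ha
      exact hx0 (eq_zero_of_coords x ((sSum_eq_zero_iff x).1 h) ha)
    refine ⟨hs, ?_⟩
    rw [ha, mul_div_assoc, div_self hs, mul_one]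
    exact haV
  · rintro ⟨hs, hr⟩
    refine ⟨?_, _, hr, (div_mul_cancel₀ _ hs).symm⟩
    intro h0
    exact hs (by rw [h0]; simp [sSum])

lemma mem_setB_iff (V : Subring R) (x : Fin (m+2) → R) :
    x ∈ setB V m ↔ (sSum m x = 0 ∧ x (Fin.last (m+1)) ≠ 0) ∨
      (sSum m x ≠ 0 ∧ x (Fin.last (m+1)) ^ 2 / sSum m x ∉ V) := by
  rw [setB, Set.mem_diff, mem_setA_iff]
  constructor
  · rintro ⟨hx0, hA⟩
    by_cases hs : sSum m x = 0
    · left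
      refine ⟨hs, fun hl => hx0 (eq_zero_of_coords x ((sSum_eq_zero_iff x).1 hs) hl)⟩
    · right
      exact ⟨hs, fun hr => hA ⟨hs, hr⟩⟩
  · rintro (⟨hs, hl⟩ | ⟨hs, hr⟩)
    · exact ⟨fun h0 => hl (by rw [h0]; rfl), fun h => h.1 hs⟩
    · refine ⟨?_, fun h => hr h.2⟩
      intro h0
      exact hs (by rw [h0]; simp [sSum])

end
section
variable {R : Type*} [Field R] [LinearOrder R] [IsStrictOrderedRing R] [TopologicalSpace R] [OrderTopology R] {m : ℕ}
  (V : Subring R) (hV : ∀ x y : R, y ∈ V → |x| ≤ |y| → x ∈ V)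

include hV

lemma isOpen_setA : IsOpen (setA V m) := by
  have : setA V m = {x : Fin (m+2) → R | sSum m x ≠ 0} ∩
      (fun x : Fin (m+2) → R => x (Fin.last (m+1)) ^ 2 / sSum m x) ⁻¹' (V : Set R) := by
    ext x; rw [Set.mem_inter_iff, mem_setA_iff]; rfl
  rw [this]
  refine ContinuousOn.isOpen_inter_preimage ?_ ?_ (isOpen_V V hV)
  · exact ContinuousOn.div (((continuous_apply _).pow 2).continuousOn)
      continuous_sSum.continuousOn (fun x hx => hx)
  · exact isOpen_ne_fun continuous_sSum continuous_const

lemma isOpen_setB (ε : R) (hε0 : 0 < ε) (hεinv : ε⁻¹ ∉ V) : IsOpen (setB V m) := by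
  rw [isOpen_iff_mem_nhds]
  intro x hx
  rw [mem_setB_iff] at hx
  rcases hx with ⟨hs, hl⟩ | ⟨hs, hr⟩
  · -- s x = 0, x last ≠ 0 : explicit neighborhood
    set c := x (Fin.last (m+1)) with hc
    have hc2 : 0 < c ^ 2 := by positivity
    have hU : IsOpen ({y : Fin (m+2) → R | sSum m y < ε * c^2 / 4} ∩
        {y : Fin (m+2) → R | c^2/2 < y (Fin.last (m+1)) ^ 2}) :=
      (isOpen_lt continuous_sSum continuous_const).inter
        (isOpen_lt continuous_const ((continuous_apply _).pow 2))
    refine Filter.mem_of_superset (hU.mem_nhds ⟨?_, ?_⟩) ?_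
    · simpa [hs] using by positivity
    · simp only [Set.mem_setOf_eq, ← hc]; linarith
    · rintro y ⟨hy1, hy2⟩
      rw [Set.mem_setOf_eq] at hy1 hy2
      rw [mem_setB_iff]
      by_cases hys : sSum m y = 0
      · left
        refine ⟨hys, fun h0 => ?_⟩
        rw [h0] at hy2; simp at hy2; linarith
      · right
        refine ⟨hys, fun haV => ?_⟩
        set a := y (Fin.last (m+1)) ^ 2 / sSum m y with ha
        have hsy : 0 < sSum m y := (sSum_nonneg y).lt_of_ne (Ne.symm hys)
        have ha0 : 0 ≤ a := div_nonneg (sq_nonneg _) (le_of_lt hsy)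
        have hea : ε * a < 1 := eps_mul_lt_one V hV hε0 hεinv haV ha0
        have hya : y (Fin.last (m+1)) ^ 2 = a * sSum m y := (div_mul_cancel₀ _ hys).symm
        have h5 : a * sSum m y ≤ a * (ε * c^2/4) := by
          apply mul_le_mul_of_nonneg_left (le_of_lt hy1) ha0
        have h6 : a * (ε * c^2/4) = (ε * a) * (c^2/4) := by ring
        have h7 : (ε * a) * (c^2/4) < 1 * (c^2/4) := by
          apply mul_lt_mul_of_pos_right hea; positivity
        nlinarith
  · -- continuity case
    have hU : IsOpen ({x : Fin (m+2) → R | sSum m x ≠ 0} ∩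
        (fun x : Fin (m+2) → R => x (Fin.last (m+1)) ^ 2 / sSum m x) ⁻¹' ((V : Set R)ᶜ)) := by
      refine ContinuousOn.isOpen_inter_preimage ?_ ?_ (isClosed_V V hV).isOpen_compl
      · exact ContinuousOn.div (((continuous_apply _).pow 2).continuousOn)
          continuous_sSum.continuousOn (fun x hx => hx)
      · exact isOpen_ne_fun continuous_sSum continuous_const
    refine Filter.mem_of_superset (hU.mem_nhds ⟨hs, hr⟩) ?_
    rintro y ⟨hy1, hy2⟩
    rw [mem_setB_iff]
    exact Or.inr ⟨hy1, hy2⟩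

end

section
variable {R : Type*} [Field R] [LinearOrder R] [IsStrictOrderedRing R] {m : ℕ} (V : Subring R) (ε : R)

lemma fMap_zero : fMap V ε m 0 = 0 := by
  unfold fMap; simp

lemma fMap_of_mem_setA {x : Fin (m+2) → R} (hx : x ∈ setA V m) : fMap V ε m x = x := by
  unfold fMap
  rw [if_neg hx.1, if_pos hx]

lemma fMap_of_mem_setB {x : Fin (m+2) → R} (hx : x ∈ setB V m) : fMap V ε m x = hMap ε m x := by
  unfold fMap
  rw [if_neg hx.1, if_neg hx.2]

lemma hMap_injective (hε : ε ≠ 0) : Function.Injective (hMap ε m : (Fin (m+2) → R) → _) := by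
  intro x y hxy
  funext i
  by_cases hi : i = Fin.last (m+1)
  · subst hi
    have := congrFun hxy (Fin.last (m+1))
    simp only [hMap, Function.update_self] at this
    exact mul_left_cancel₀ hε this
  · have := congrFun hxy i
    simpa only [hMap, Function.update_of_ne hi] using this

lemma continuous_hMap [TopologicalSpace R] [OrderTopology R] :
    Continuous (hMap ε m : (Fin (m+2) → R) → _) := by
  apply continuous_pi
  intro i
  by_cases hi : i = Fin.last (m+1)
  · subst hi
    simp only [hMap, Function.update_self]
    exact continuous_const.mul (continuous_apply _)
  · simp only [hMap, Function.update_of_ne hi]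
    exact continuous_apply _

end
section
variable {R : Type*} [Field R] [LinearOrder R] [IsStrictOrderedRing R] {m : ℕ} (V : Subring R) {ε : R}

lemma fMap_bound (hε0 : 0 < ε) (hε1 : ε < 1) (x : Fin (m+2) → R) (i : Fin (m+2)) :
    -|x i| ≤ fMap V ε m x i ∧ fMap V ε m x i ≤ |x i| := by
  by_cases hx : x = 0
  · subst hx; rw [fMap_zero]; simp
  · by_cases hA : x ∈ setA V m
    · rw [fMap_of_mem_setA V ε hA]; exact ⟨neg_abs_le _, le_abs_self _⟩
    · rw [fMap_of_mem_setB V ε ⟨hx, hA⟩]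
      by_cases hi : i = Fin.last (m+1)
      · subst hi
        simp only [hMap, Function.update_self]
        have habs : |ε * x (Fin.last (m+1))| ≤ |x (Fin.last (m+1))| := by
          rw [abs_mul, abs_of_pos hε0]
          exact mul_le_of_le_one_left (abs_nonneg _) (le_of_lt hε1)
        exact ⟨le_trans (neg_le_neg habs) (neg_abs_le _), le_trans (le_abs_self _) habs⟩
      · simp only [hMap, Function.update_of_ne hi]
        exact ⟨neg_abs_le _, le_abs_self _⟩

lemma continuous_fMap [TopologicalSpace R] [OrderTopology R]
    (hV : ∀ x y : R, y ∈ V → |x| ≤ |y| → x ∈ V)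
    (hε0 : 0 < ε) (hεinv : ε⁻¹ ∉ V) : Continuous (fMap V ε m) := by
  have hε1 : ε < 1 := eps_lt_one V hV hε0 hεinv
  rw [continuous_iff_continuousAt]
  intro x
  by_cases hx : x = 0
  · subst hx
    rw [ContinuousAt, fMap_zero]
    rw [tendsto_pi_nhds]
    intro i
    have h0 : (0 : Fin (m+2) → R) i = 0 := rfl
    rw [h0]
    apply tendsto_of_tendsto_of_tendsto_of_le_of_le
      (g := fun x : Fin (m+2) → R => -|x i|) (h := fun x : Fin (m+2) → R => |x i|)
    · have : Continuous (fun x : Fin (m+2) → R => -|x i|) := ((continuous_apply i).abs).neg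
      simpa using this.tendsto 0
    · have : Continuous (fun x : Fin (m+2) → R => |x i|) := (continuous_apply i).abs
      simpa using this.tendsto 0
    · exact fun y => (fMap_bound V hε0 hε1 y i).1
    · exact fun y => (fMap_bound V hε0 hε1 y i).2
  · by_cases hA : x ∈ setA V m
    · refine ContinuousAt.congr continuousAt_id ?_
      exact Filter.eventuallyEq_of_mem ((isOpen_setA V hV).mem_nhds hA)
        (fun y hy => (fMap_of_mem_setA V ε hy).symm)
    · have hB : x ∈ setB V m := ⟨hx, hA⟩
      refine ContinuousAt.congr (continuous_hMap ε).continuousAt ?_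
      exact Filter.eventuallyEq_of_mem ((isOpen_setB V hV ε hε0 hεinv).mem_nhds hB)
        (fun y hy => (fMap_of_mem_setB V ε hy).symm)

lemma fiber_bound (hε : ε ≠ 0) (y : Fin (m+2) → R) :
    (fMap V ε m ⁻¹' {y}).encard ≤ 2 := by
  have hsub : fMap V ε m ⁻¹' {y} ⊆
      {y, Function.update y (Fin.last (m+1)) (ε⁻¹ * y (Fin.last (m+1)))} := by
    intro x hx
    rw [Set.mem_preimage, Set.mem_singleton_iff] at hx
    by_cases hx0 : x = 0
    · subst hx0
      rw [fMap_zero] at hx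
      left; exact hx.symm ▸ rfl
    · by_cases hA : x ∈ setA V m
      · left; rw [← hx, fMap_of_mem_setA V ε hA]
      · have hB : x ∈ setB V m := ⟨hx0, hA⟩
        rw [fMap_of_mem_setB V ε hB] at hx
        right
        rw [Set.mem_singleton_iff, ← hx]
        funext i
        by_cases hi : i = Fin.last (m+1)
        · subst hi
          simp only [hMap, Function.update_self]
          rw [← mul_assoc, inv_mul_cancel₀ hε, one_mul]
        · simp only [hMap, Function.update_of_ne hi]
  refine le_trans (Set.encard_mono hsub) ?_
  refine le_trans (Set.encard_insert_le _ _) ?_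
  rw [Set.encard_singleton]
  norm_num

end
section
variable {R : Type*} [Field R] [LinearOrder R] [IsStrictOrderedRing R] {m : ℕ}

/-- curve helper: value `c` at coordinate 0, `d` at the last coordinate, 0 elsewhere. -/
noncomputable def vv (m : ℕ) (c d : R) : Fin (m+2) → R :=
  fun i => if i = Fin.last (m+1) then d else if i = 0 then c else 0

lemma zero_ne_last : (0 : Fin (m+2)) ≠ Fin.last (m+1) := by
  simp [Fin.ext_iff]

lemma vv_last (c d : R) : vv m c d (Fin.last (m+1)) = d := if_pos rfl

lemma vv_zero (c d : R) : vv m c d 0 = c := by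
  rw [vv, if_neg zero_ne_last, if_pos rfl]

lemma vv_ne_zero {c : R} (hc : c ≠ 0) (d : R) : vv m c d ≠ 0 := by
  intro h
  exact hc (by rw [← vv_zero c d, h]; rfl)

lemma sSum_vv (c d : R) : sSum m (vv m c d) = c ^ 2 := by
  unfold sSum vv
  have h1 : ∀ i : Fin (m+1), (i.castSucc = Fin.last (m+1)) = False := by
    intro i; simp [(Fin.castSucc_lt_last i).ne]
  simp only [h1, if_false, Fin.castSucc_eq_zero_iff]
  have h2 : ∀ i : Fin (m+1), (if i = 0 then c else 0)^2 = if i = 0 then c^2 else 0 :=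
    fun i => by split_ifs <;> simp
  simp only [h2, Finset.sum_ite_eq', Finset.mem_univ, if_true]

lemma vv_mem_setA (V : Subring R) {t : R} (ht : t ≠ 0) : vv m t t ∈ setA V m := by
  refine ⟨vv_ne_zero ht t, 1, V.one_mem, ?_⟩
  rw [vv_last, sSum_vv, one_mul]

lemma vv_mem_setB (V : Subring R) (hV : ∀ x y : R, y ∈ V → |x| ≤ |y| → x ∈ V)
    {ε : R} (hε0 : 0 < ε) (hεinv : ε⁻¹ ∉ V) {t : R} (ht : t ≠ 0) :
    vv m t (ε⁻¹ * t) ∈ setB V m := by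
  refine ⟨vv_ne_zero ht _, ?_⟩
  rintro ⟨-, a, haV, ha⟩
  rw [vv_last, sSum_vv, mul_pow] at ha
  have ht2 : t ^ 2 ≠ 0 := pow_ne_zero _ ht
  have : ε⁻¹ ^ 2 = a := mul_right_cancel₀ ht2 ha
  exact eps_sq_inv_not_mem V hV hε0 hεinv (this ▸ haV)

lemma hMap_vv {ε : R} (hε : ε ≠ 0) (t : R) :
    hMap ε m (vv m t (ε⁻¹ * t)) = vv m t t := by
  funext i
  by_cases hi : i = Fin.last (m+1)
  · subst hi
    simp only [hMap, Function.update_self, vv_last, ← mul_assoc, mul_inv_cancel₀ hε, one_mul]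
  · simp only [hMap, Function.update_of_ne hi, vv]
    rw [if_neg hi, if_neg hi]

lemma vv_ne_vv {ε t : R} (hε0 : 0 < ε) (hε1 : ε < 1) (ht : 0 < t) :
    vv m t t ≠ vv m t (ε⁻¹ * t) := by
  intro h
  have := congrFun h (Fin.last (m+1))
  rw [vv_last, vv_last] at this
  have h1 : (1:R) < ε⁻¹ := (one_lt_inv₀ hε0).2 hε1
  nlinarith

end
/-- `f` is continuous, every fiber of `f` has at most two points, and the
ramification locus of `f` is exactly `{0}`. -/
theorem statement_1 {R : Type*} [Field R] [LinearOrder R] [IsStrictOrderedRing R] [TopologicalSpace R] [OrderTopology R]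
    (V : Subring R) (hV : ∀ x y : R, y ∈ V → |x| ≤ |y| → x ∈ V)
    (ε : R) (hε0 : 0 < ε) (hεV : ε ∈ V) (hεinv : ε⁻¹ ∉ V) (m : ℕ) :
    Continuous (fMap V ε m) ∧
    (∀ y : Fin (m + 2) → R, (fMap V ε m ⁻¹' {y}).encard ≤ 2) ∧
    {x : Fin (m + 2) → R | ¬ ∃ U ∈ nhds x, Set.InjOn (fMap V ε m) U} = {0} := by
  have hε1 : ε < 1 := eps_lt_one V hV hε0 hεinv
  refine ⟨continuous_fMap V hV hε0 hεinv, fun y => fiber_bound V (ne_of_gt hε0) y, ?_⟩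
  ext x
  simp only [Set.mem_setOf_eq, Set.mem_singleton_iff]
  constructor
  · intro hx
    by_contra hx0
    apply hx
    by_cases hA : x ∈ setA V m
    · exact ⟨setA V m, (isOpen_setA V hV).mem_nhds hA, fun a ha b hb hab => by
        rwa [fMap_of_mem_setA V ε ha, fMap_of_mem_setA V ε hb] at hab⟩
    · have hB : x ∈ setB V m := ⟨hx0, hA⟩
      exact ⟨setB V m, (isOpen_setB V hV ε hε0 hεinv).mem_nhds hB, fun a ha b hb hab => by
        rw [fMap_of_mem_setB V ε ha, fMap_of_mem_setB V ε hb] at hab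
        exact hMap_injective ε (ne_of_gt hε0) hab⟩
  · rintro rfl
    rintro ⟨U, hU, hinj⟩
    have hv1 : Filter.Tendsto (fun t : R => vv m t t)
        (nhdsWithin 0 (Set.Ioi 0)) (nhds 0) := by
      apply Filter.Tendsto.mono_left ?_ nhdsWithin_le_nhds
      rw [tendsto_pi_nhds]
      intro i
      have h0 : (0 : Fin (m+2) → R) i = 0 := rfl
      rw [h0]
      unfold vv
      split_ifs
      · exact Filter.tendsto_id
      · exact Filter.tendsto_id
      · exact tendsto_const_nhds
    have hv2 : Filter.Tendsto (fun t : R => vv m t (ε⁻¹ * t))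
        (nhdsWithin 0 (Set.Ioi 0)) (nhds 0) := by
      apply Filter.Tendsto.mono_left ?_ nhdsWithin_le_nhds
      rw [tendsto_pi_nhds]
      intro i
      have h0 : (0 : Fin (m+2) → R) i = 0 := rfl
      rw [h0]
      unfold vv
      split_ifs
      · simpa using (Filter.tendsto_id (x := nhds (0:R))).const_mul ε⁻¹
      · exact Filter.tendsto_id
      · exact tendsto_const_nhds
    obtain ⟨t, ht1, ht2, ht0⟩ :=
      ((hv1.eventually_mem hU).and ((hv2.eventually_mem hU).and self_mem_nhdsWithin)).exists
    have htpos : (0:R) < t := ht0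
    have hA := vv_mem_setA (m := m) V (ne_of_gt htpos)
    have hB := vv_mem_setB (m := m) V hV hε0 hεinv (ne_of_gt htpos)
    have heq : fMap V ε m (vv m t (ε⁻¹ * t)) = fMap V ε m (vv m t t) := by
      rw [fMap_of_mem_setB V ε hB, fMap_of_mem_setA V ε hA, hMap_vv (ne_of_gt hε0)]
    exact vv_ne_vv hε0 hε1 htpos (hinj ht2 ht1 heq).symm
end

section
/- For every neighborhood U of 0⃗ in R^n there exist points a ∈ A ∩ U and b ∈ B ∩ U with h(b) = a. -/
/-- every neighborhood `U` of `0` contains points `a ∈ A`, `b ∈ B` with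
`h(b) = a`. -/
theorem statement_4 {R : Type*} [Field R] [LinearOrder R] [IsStrictOrderedRing R] [TopologicalSpace R] [OrderTopology R]
    (V : Subring R) (hV : ∀ x y : R, y ∈ V → |x| ≤ |y| → x ∈ V)
    (ε : R) (hε0 : 0 < ε) (hεV : ε ∈ V) (hεinv : ε⁻¹ ∉ V) (m : ℕ) :
    ∀ U ∈ nhds (0 : Fin (m + 2) → R),
      ∃ a ∈ setA V m ∩ U, ∃ b ∈ setB V m ∩ U, hMap ε m b = a := by
  classical
  intro U hU
  set L := Fin.last (m + 1) with hL
  -- ε ≤ 1, hence ε⁻¹ ≥ 1, hence ε⁻² ∉ V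
  have hε1 : ε ≤ 1 := by
    by_contra h
    push_neg at h
    exact hεinv (hV _ 1 V.one_mem (by
      rw [abs_of_pos (inv_pos.mpr hε0), abs_one]
      exact le_of_lt (inv_lt_one_of_one_lt₀ h)))
  have hinv1 : (1 : R) ≤ ε⁻¹ := (one_le_inv₀ hε0).mpr hε1
  have hε2inv : (ε ^ 2)⁻¹ ∉ V := by
    intro hmem
    apply hεinv
    refine hV _ _ hmem ?_
    have h1 : (0:R) < ε⁻¹ := inv_pos.mpr hε0
    rw [abs_of_pos h1, abs_of_pos (by positivity)]
    calc ε⁻¹ = ε⁻¹ * 1 := (mul_one _).symm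
      _ ≤ ε⁻¹ * ε⁻¹ := by nlinarith
      _ = (ε ^ 2)⁻¹ := by rw [sq, mul_inv]
  -- the curves
  set c : R → (Fin (m + 2) → R) := fun t i => if i = L then t else if i = 0 then ε * t else 0
    with hc
  set d : R → (Fin (m + 2) → R) := fun t i => if i = L then ε * t else if i = 0 then ε * t else 0
    with hd
  have hmap_eq : ∀ t, hMap ε m (c t) = d t := by
    intro t
    funext i
    simp only [hMap, Function.update_apply, hc, hd]
    by_cases h : i = L <;> simp [h, ← hL]
  have hcc : Continuous c := by
    apply continuous_pi
    intro i
    simp only [hc]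
    split_ifs
    · exact continuous_id
    · exact continuous_const.mul continuous_id
    · exact continuous_const
  have hdc : Continuous d := by
    apply continuous_pi
    intro i
    simp only [hd]
    split_ifs
    · exact continuous_const.mul continuous_id
    · exact continuous_const.mul continuous_id
    · exact continuous_const
  have hc0 : c 0 = 0 := by funext i; simp [hc]
  have hd0 : d 0 = 0 := by funext i; simp [hd]
  have hW : c ⁻¹' U ∩ d ⁻¹' U ∈ nhds (0 : R) := by
    refine Filter.inter_mem ?_ ?_
    · have := hcc.continuousAt (x := (0:R))
      exact this (hc0 ▸ hU)
    · have := hdc.continuousAt (x := (0:R))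
      exact this (hd0 ▸ hU)
  obtain ⟨l, u, h0mem, hsub⟩ := mem_nhds_iff_exists_Ioo_subset.mp hW
  set t : R := u / 2 with ht
  have htpos : 0 < t := by
    have := h0mem.2
    positivity
  have htmem : t ∈ Set.Ioo l u := ⟨lt_trans h0mem.1 htpos, by linarith [h0mem.2]⟩
  have htW := hsub htmem
  -- sums of squares
  have hcastne : ∀ i : Fin (m + 1), i.castSucc ≠ L := fun i => (Fin.castSucc_lt_last i).ne
  have hsum_c : sSum m (c t) = (ε * t) ^ 2 := by
    unfold sSum
    have : ∀ i : Fin (m + 1), (c t i.castSucc) ^ 2 = if i = 0 then (ε * t) ^ 2 else 0 := by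
      intro i
      simp only [hc, if_neg (hcastne i), Fin.castSucc_eq_zero_iff]
      by_cases h : i = 0 <;> simp [h]
    rw [Finset.sum_congr rfl (fun i _ => this i), Finset.sum_ite_eq' Finset.univ 0]
    simp
  have hsum_d : sSum m (d t) = (ε * t) ^ 2 := by
    unfold sSum
    have : ∀ i : Fin (m + 1), (d t i.castSucc) ^ 2 = if i = 0 then (ε * t) ^ 2 else 0 := by
      intro i
      simp only [hd, if_neg (hcastne i), Fin.castSucc_eq_zero_iff]
      by_cases h : i = 0 <;> simp [h]
    rw [Finset.sum_congr rfl (fun i _ => this i), Finset.sum_ite_eq' Finset.univ 0]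
    simp
  have hcL : c t L = t := by simp [hc]
  have hdL : d t L = ε * t := by simp [hd]
  refine ⟨d t, ⟨⟨?_, 1, V.one_mem, ?_⟩, htW.2⟩, c t, ⟨⟨?_, ?_⟩, htW.1⟩, hmap_eq t⟩
  · intro h
    have := congrFun h L
    rw [hdL] at this
    simp only [Pi.zero_apply] at this
    exact (mul_pos hε0 htpos).ne' this
  · rw [hdL, hsum_d, one_mul]
  · intro h
    have := congrFun h L
    rw [hcL] at this
    exact htpos.ne' this
  · rintro ⟨-, a, haV, heq⟩
    rw [hcL, hsum_c] at heq
    have ht2 : t ^ 2 ≠ 0 := by positivity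
    have key : a * ε ^ 2 = 1 :=
      mul_right_cancel₀ ht2 (by ring_nf; ring_nf at heq; linarith [heq])
    exact hε2inv ((eq_inv_of_mul_eq_one_left key) ▸ haV)
end

section
/- The map f is locally injective at every point other than the origin: for every x ∈ R^n with x ≠ 0⃗ there is an open neighborhood of x on which f is injective. -/
lemma hMap_injective_s7 {R : Type*} [Field R] [LinearOrder R] [IsStrictOrderedRing R] {ε : R} (hε : ε ≠ 0) (m : ℕ) :
    Function.Injective (hMap ε m) := by
  intro a b hab
  funext i
  by_cases hi : i = Fin.last (m + 1)
  · subst hi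
    have h := congrFun hab (Fin.last (m + 1))
    simp only [hMap, Function.update_self] at h
    exact mul_left_cancel₀ hε h
  · have h := congrFun hab i
    simpa [hMap, Function.update_of_ne hi] using h

/-- `f` is locally injective at every point other than the origin. -/
theorem statement_7 {R : Type*} [Field R] [LinearOrder R] [IsStrictOrderedRing R] [TopologicalSpace R] [OrderTopology R]
    (V : Subring R) (hV : ∀ x y : R, y ∈ V → |x| ≤ |y| → x ∈ V)
    (ε : R) (hε0 : 0 < ε) (hεV : ε ∈ V) (hεinv : ε⁻¹ ∉ V) (m : ℕ) :
    ∀ x : Fin (m + 2) → R, x ≠ 0 →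
      ∃ U : Set (Fin (m + 2) → R), IsOpen U ∧ x ∈ U ∧ Set.InjOn (fMap V ε m) U := by
  classical
  -- ε is small: 2ε < 1
  have h2V : (2 : R) ∈ V := by
    have h1 := V.one_mem
    have := V.add_mem h1 h1
    norm_num at this
    norm_num
  have h2lt : (2 : R) < ε⁻¹ := by
    by_contra h
    push_neg at h
    refine hεinv (hV _ _ h2V ?_)
    rw [abs_of_pos (inv_pos.mpr hε0), abs_of_pos (by norm_num : (0:R) < 2)]
    exact h
  have hε2 : 2 * ε < 1 := by
    have h := mul_lt_mul_of_pos_left h2lt hε0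
    rw [mul_inv_cancel₀ (ne_of_gt hε0)] at h
    linarith [h]
  intro x hx
  set L := Fin.last (m + 1) with hL
  by_cases hxL : x L ≠ 0
  · -- Case 1: last coordinate nonzero.
    set X := |x L| with hX
    have hX0 : 0 < X := abs_pos.mpr hxL
    refine ⟨(fun y : Fin (m + 2) → R => y L) ⁻¹' Set.Ioo (x L - X/3) (x L + X/3),
      isOpen_Ioo.preimage (continuous_apply L), ?_, ?_⟩
    · constructor <;> simp <;> linarith
    · -- the key arithmetic: no pair p, q in the slab can satisfy p L = ε * q L
      have key : ∀ s t : R, |s - x L| < X/3 → |t - x L| < X/3 → s = ε * t → False := by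
        intro s t hs ht hst
        have hS : X - |s| ≤ |s - x L| := by
          have := abs_sub_abs_le_abs_sub (x L) s
          rw [abs_sub_comm] at this
          linarith
        have hT : |t| - X ≤ |t - x L| := by
          have := abs_sub_abs_le_abs_sub t (x L)
          linarith
        have hAbs : |s| = ε * |t| := by rw [hst, abs_mul, abs_of_pos hε0]
        have hTnn : (0 : R) ≤ |t| := abs_nonneg _
        nlinarith [mul_nonneg (by linarith : (0:R) ≤ 1 - 2 * ε) hTnn]
      intro a ha b hb hab
      obtain ⟨ha1, ha2⟩ := ha
      obtain ⟨hb1, hb2⟩ := hb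
      have haU : |a L - x L| < X/3 := abs_lt.mpr ⟨by linarith, by linarith⟩
      have hbU : |b L - x L| < X/3 := abs_lt.mpr ⟨by linarith, by linarith⟩
      have ha0 : a ≠ 0 := by
        intro h
        rw [h] at haU
        simp only [Pi.zero_apply, zero_sub, abs_neg] at haU
        linarith [haU]
      have hb0 : b ≠ 0 := by
        intro h
        rw [h] at hbU
        simp only [Pi.zero_apply, zero_sub, abs_neg] at hbU
        linarith [hbU]
      unfold fMap at hab
      rw [if_neg ha0, if_neg hb0] at hab
      by_cases haA : a ∈ setA V m <;> by_cases hbA : b ∈ setA V m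
      · rwa [if_pos haA, if_pos hbA] at hab
      · rw [if_pos haA, if_neg hbA] at hab
        exfalso
        have h := congrFun hab L
        simp only [hMap, hL, Function.update_self] at h
        exact key _ _ haU hbU h
      · rw [if_neg haA, if_pos hbA] at hab
        exfalso
        have h := congrFun hab.symm L
        simp only [hMap, hL, Function.update_self] at h
        exact key _ _ hbU haU h
      · rw [if_neg haA, if_neg hbA] at hab
        exact hMap_injective_s7 (ne_of_gt hε0) m hab
  · -- Case 2: last coordinate zero; some other coordinate of x is nonzero.
    push_neg at hxL
    obtain ⟨k, hk⟩ := Function.ne_iff.mp hx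
    have hkL : k ≠ L := by
      intro h
      rw [h] at hk
      exact hk (by simpa using hxL)
    obtain ⟨i, hi⟩ : ∃ i : Fin (m + 1), k = i.castSucc := by
      refine ⟨k.castPred (by simpa [hL] using hkL), ?_⟩
      simp
    have hk0 : x k ≠ 0 := by simpa using hk
    set c := |x k| / 2 with hc
    have hc0 : 0 < c := by
      have : 0 < |x k| := abs_pos.mpr hk0
      rw [hc]; linarith
    refine ⟨((fun y : Fin (m + 2) → R => y k) ⁻¹' Set.Ioo (x k - c) (x k + c)) ∩
        ((fun y : Fin (m + 2) → R => y L) ⁻¹' Set.Ioo (-c) c),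
      (isOpen_Ioo.preimage (continuous_apply k)).inter
        (isOpen_Ioo.preimage (continuous_apply L)), ?_, ?_⟩
    · constructor
      · constructor <;> simp <;> linarith
      · constructor <;> simp [hxL] <;> linarith
    · -- the whole box lies inside `setA`, where `fMap` is the identity
      have key : ∀ y : Fin (m + 2) → R,
          y ∈ ((fun y : Fin (m + 2) → R => y k) ⁻¹' Set.Ioo (x k - c) (x k + c)) ∩
            ((fun y : Fin (m + 2) → R => y L) ⁻¹' Set.Ioo (-c) c) → fMap V ε m y = y := by
        intro y ⟨hy1, hy2⟩
        obtain ⟨hy1a, hy1b⟩ := hy1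
        obtain ⟨hy2a, hy2b⟩ := hy2
        have hdk : |y k - x k| < c := abs_lt.mpr ⟨by linarith, by linarith⟩
        have hyk : c < |y k| := by
          have h1 := abs_sub_abs_le_abs_sub (x k) (y k)
          rw [abs_sub_comm] at h1
          have h2 : |x k| = 2 * c := by rw [hc]; ring
          linarith
        have hyL : |y L| < c := abs_lt.mpr ⟨by linarith, by linarith⟩
        have hyk0 : y k ≠ 0 := by
          intro h
          rw [h] at hyk
          simp at hyk
          linarith
        have hy0 : y ≠ 0 := by
          intro h
          apply hyk0
          rw [h]
          rfl
        -- sSum bound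
        have hsk : y k ^ 2 ≤ sSum m y := by
          rw [hi]
          exact Finset.single_le_sum (f := fun t : Fin (m + 1) => y t.castSucc ^ 2)
            (fun t _ => sq_nonneg _) (Finset.mem_univ i)
        have hsq : y L ^ 2 < y k ^ 2 := by
          have h1 : |y L| < |y k| := lt_trans hyL hyk
          have h2 : |y L| * |y L| < |y k| * |y k| :=
            mul_self_lt_mul_self (abs_nonneg _) h1
          nlinarith [sq_abs (y L), sq_abs (y k)]
        have hs0 : 0 < sSum m y := lt_of_lt_of_le (by positivity) hsk
        have hyA : y ∈ setA V m := by
          refine ⟨hy0, y L ^ 2 / sSum m y, ?_, ?_⟩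
          · refine hV _ 1 V.one_mem ?_
            rw [abs_one, abs_of_nonneg (div_nonneg (sq_nonneg _) (le_of_lt hs0))]
            rw [div_le_one hs0]
            linarith
          · rw [div_mul_cancel₀ _ (ne_of_gt hs0)]
        unfold fMap
        rw [if_neg hy0, if_pos hyA]
      intro a ha b hb hab
      rw [key a ha, key b hb] at hab
      exact hab
end
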